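/- Let k be a field and w1, w2 positive integers. Consider the map φ: A^3 → A^4 given by (x, y, z) ↦ (x, y, z^{w1} x, z^{w2} y). Let V ⊆ A^3 be the open subset where (x,y) ≠ (0,0) and U ⊆ A^4 the open subset where the first two coordinates are not both zero. Then φ restricts to a finite morphism V → U. -/
import Mathlib


/-!
STATEMENT 3: the map `φ : 𝔸³ → 𝔸⁴, (x,y,z) ↦ (x, y, z^{w1}x, z^{w2}y)` restricts to a
finite morphism `V → U`, where `V = 𝔸³ \ V(x,y)` and `U = 𝔸⁴ \ V(X,Y)`.
Finiteness is checked on the affine cover `{X ≠ 0, Y ≠ 0}` of `U`: over each chart the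
coordinate ring of `V` (the localization of `k[x,y,z]` at `x`, resp. at `y`) is a finite
module over the subalgebra generated by the pulled-back coordinate functions
`x, y, z^{w1}x, z^{w2}y` together with the inverse of `x` (resp. of `y`).
Variables: `X 0 = x`, `X 1 = y`, `X 2 = z`.
-/

open MvPolynomial


set_option synthInstance.maxHeartbeats 1000000 in
lemma aux_finite (k : Type) [Field k] (w : ℕ) (hw : 0 < w)
    (f : MvPolynomial (Fin 3) k)
    (S : Set (Localization.Away f))
    (h0 : algebraMap (MvPolynomial (Fin 3) k) (Localization.Away f) (X 0) ∈ S)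
    (h1 : algebraMap (MvPolynomial (Fin 3) k) (Localization.Away f) (X 1) ∈ S)
    (hinv : IsLocalization.Away.invSelf (S := Localization.Away f) f ∈ S)
    (hmon : algebraMap (MvPolynomial (Fin 3) k) (Localization.Away f) (X 2 ^ w * f) ∈ S) :
    Module.Finite (Algebra.adjoin k S) (Localization.Away f) := by
  let L := Localization.Away f
  let A := Algebra.adjoin k S
  let φ : MvPolynomial (Fin 3) k →+* L := algebraMap (MvPolynomial (Fin 3) k) L
  let inv : L := IsLocalization.Away.invSelf (S := L) f
  let ζ : L := φ (X 2)
  have hfinv : φ f * inv = 1 := IsLocalization.Away.mul_invSelf f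
  have hpow : ζ ^ w ∈ A := by
    have h : φ (X 2 ^ w * f) * inv = ζ ^ w := by
      show φ (X 2 ^ w * f) * inv = φ (X 2) ^ w
      rw [map_mul, map_pow, mul_assoc, hfinv, mul_one]
    rw [← h]
    exact mul_mem (Algebra.subset_adjoin hmon) (Algebra.subset_adjoin hinv)
  have hint : IsIntegral A ζ := by
    refine ⟨Polynomial.X ^ w - Polynomial.C (⟨ζ ^ w, hpow⟩ : A),
      Polynomial.monic_X_pow_sub_C _ hw.ne', ?_⟩
    simp only [Polynomial.eval₂_sub, Polynomial.eval₂_pow, Polynomial.eval₂_X,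
      Polynomial.eval₂_C, sub_eq_zero]
    rfl
  have hA : ∀ a : L, a ∈ A → a ∈ Algebra.adjoin A {ζ} := fun a ha =>
    Subalgebra.algebraMap_mem (Algebra.adjoin A {ζ}) (⟨a, ha⟩ : A)
  have hr : ∀ r : MvPolynomial (Fin 3) k, φ r ∈ Algebra.adjoin A {ζ} := by
    intro r
    have hrmem : r ∈ Algebra.adjoin k (Set.range (X : Fin 3 → MvPolynomial (Fin 3) k)) := by
      rw [adjoin_range_X]; trivial
    induction hrmem using Algebra.adjoin_induction with
    | mem p hp =>
        obtain ⟨j, rfl⟩ := hp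
        fin_cases j
        · exact hA _ (Algebra.subset_adjoin h0)
        · exact hA _ (Algebra.subset_adjoin h1)
        · exact Algebra.subset_adjoin rfl
    | algebraMap c =>
        rw [← IsScalarTower.algebraMap_apply k (MvPolynomial (Fin 3) k) L]
        exact hA _ (Subalgebra.algebraMap_mem A c)
    | add p q _ _ hp hq => rw [map_add]; exact add_mem hp hq
    | mul p q _ _ hp hq => rw [map_mul]; exact mul_mem hp hq
  have htop : Algebra.adjoin A {ζ} = ⊤ := by
    rw [eq_top_iff]
    intro z _
    obtain ⟨⟨r, s⟩, hs⟩ := IsLocalization.surj (Submonoid.powers f) z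
    obtain ⟨n, hn⟩ := s.prop
    simp only at hs
    have hzeq : z = φ r * inv ^ n := by
      have h1' : φ (f ^ n) * inv ^ n = 1 := by
        rw [map_pow, ← mul_pow, hfinv, one_pow]
      have hsn : (s : MvPolynomial (Fin 3) k) = f ^ n := hn.symm
      calc z = z * (φ (f ^ n) * inv ^ n) := by rw [h1', mul_one]
        _ = (z * φ ((s : MvPolynomial (Fin 3) k))) * inv ^ n := by rw [hsn]; ring
        _ = φ r * inv ^ n := by rw [hs]
    rw [hzeq]
    exact mul_mem (hr r) (pow_mem (hA _ (Algebra.subset_adjoin hinv)) n)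
  have hfg := hint.fg_adjoin_singleton
  rw [htop, Algebra.top_toSubmodule] at hfg
  exact ⟨hfg⟩


theorem blowup_chart_map_is_finite (k : Type) [Field k] (w1 w2 : ℕ)
    (hw1 : 0 < w1) (hw2 : 0 < w2) :
    (Module.Finite
      (Algebra.adjoin k
        ({algebraMap (MvPolynomial (Fin 3) k)
            (Localization.Away (X 0 : MvPolynomial (Fin 3) k)) (X 0),
          algebraMap (MvPolynomial (Fin 3) k)
            (Localization.Away (X 0 : MvPolynomial (Fin 3) k)) (X 1),
          algebraMap (MvPolynomial (Fin 3) k)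
            (Localization.Away (X 0 : MvPolynomial (Fin 3) k)) (X 2 ^ w1 * X 0),
          algebraMap (MvPolynomial (Fin 3) k)
            (Localization.Away (X 0 : MvPolynomial (Fin 3) k)) (X 2 ^ w2 * X 1),
          IsLocalization.Away.invSelf
            (S := Localization.Away (X 0 : MvPolynomial (Fin 3) k))
            (X 0 : MvPolynomial (Fin 3) k)} :
          Set (Localization.Away (X 0 : MvPolynomial (Fin 3) k))))
      (Localization.Away (X 0 : MvPolynomial (Fin 3) k)))
    ∧
    (Module.Finite
      (Algebra.adjoin k
        ({algebraMap (MvPolynomial (Fin 3) k)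
            (Localization.Away (X 1 : MvPolynomial (Fin 3) k)) (X 0),
          algebraMap (MvPolynomial (Fin 3) k)
            (Localization.Away (X 1 : MvPolynomial (Fin 3) k)) (X 1),
          algebraMap (MvPolynomial (Fin 3) k)
            (Localization.Away (X 1 : MvPolynomial (Fin 3) k)) (X 2 ^ w1 * X 0),
          algebraMap (MvPolynomial (Fin 3) k)
            (Localization.Away (X 1 : MvPolynomial (Fin 3) k)) (X 2 ^ w2 * X 1),
          IsLocalization.Away.invSelf
            (S := Localization.Away (X 1 : MvPolynomial (Fin 3) k))
            (X 1 : MvPolynomial (Fin 3) k)} :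
          Set (Localization.Away (X 1 : MvPolynomial (Fin 3) k))))
      (Localization.Away (X 1 : MvPolynomial (Fin 3) k))) := by
  constructor
  · exact aux_finite k w1 hw1 (X 0) _ (by simp) (by simp) (by simp)
      (by simp only [Set.mem_insert_iff, Set.mem_singleton_iff]; tauto)
  · exact aux_finite k w2 hw2 (X 1) _ (by simp) (by simp) (by simp)
      (by simp only [Set.mem_insert_iff, Set.mem_singleton_iff]; tauto)
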